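/- Let 𝓡 be right amenable, let ℱ = (F_i)_{i∈I} be a right Følner net in 𝓡, let X be a κ-strongly irreducible subshift of Q^M with |X| ≥ 2, let Y be a subset of X, and let T be a ⟨θ,κ,θ'⟩-tiling of 𝓡 such that Y_{B(t,θ)} ⊊ X_{B(t,θ)} for every t ∈ T. Then Ent_ℱ(Y) < Ent_ℱ(X). -/

import Mathlib

open Filter Set

namespace GoE

variable {G M Q : Type*}

/-- A left homogeneous space `⟨M, G, ▷⟩` together with a coordinate system
`⟨m₀, (g_{m₀,m})_{m∈M}⟩`: a cell space with finite stabiliser `G₀` of `m₀`. -/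
structure CellSpace (G M : Type*) [Group G] where
  act : G → M → M
  one_act : ∀ m : M, act 1 m = m
  mul_act : ∀ (g h : G) (m : M), act (g * h) m = act g (act h m)
  transitive : ∀ m m' : M, ∃ g : G, act g m = m'
  m0 : M
  coord : M → G
  coord_act : ∀ m : M, act (coord m) m0 = m
  stab_finite : {g : G | act g m0 = m0}.Finite

variable [Group G]

namespace CellSpace

/-- Membership in the stabiliser `G₀` of `m₀`. -/
def stab (R : CellSpace G M) (g : G) : Prop := R.act g R.m0 = R.m0

/-- The induced right semi-action `m ↝ gG₀ = g_{m₀,m} g ▷ m₀`, on representatives. -/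
def sAct (R : CellSpace G M) (m : M) (g : G) : M := R.act (R.coord m * g) R.m0

/-- `m ↝ ι n` where `ι : M → G/G₀`, `n ↦ G_{m₀,n}` is the canonical identification. -/
def nAct (R : CellSpace G M) (m n : M) : M := R.act (R.coord m * R.coord n) R.m0

/-- `S ⊆ G` represents a finite symmetric right generating set of cosets
(`G₀ · S ⊆ S`, `S⁻¹ ⊆ S`, and `S` generates). -/
structure IsRightGenSet (R : CellSpace G M) (S : Set G) : Prop where
  finite : S.Finite
  saturated : ∀ s ∈ S, ∀ g₀ : G, R.stab g₀ → s * g₀ ∈ S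
  stab_mul : ∀ g₀ : G, R.stab g₀ → ∀ s ∈ S, g₀ * s ∈ S
  symm : ∀ s ∈ S, s⁻¹ ∈ S
  generates : ∀ m : M, ∃ (k : ℕ) (f : ℕ → M), f 0 = R.m0 ∧ f k = m ∧
    ∀ i < k, ∃ s ∈ S, f (i + 1) = R.sAct (f i) s

/-- There is an `S`-path of length `n` from `m` to `m'` in the `S`-Cayley graph. -/
def Chain (R : CellSpace G M) (S : Set G) (m m' : M) (n : ℕ) : Prop :=
  ∃ f : ℕ → M, f 0 = m ∧ f n = m' ∧ ∀ i < n, ∃ s ∈ S, f (i + 1) = R.sAct (f i) s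

/-- The `S`-metric `d`. -/
noncomputable def dist (R : CellSpace G M) (S : Set G) (m m' : M) : ℕ :=
  sInf {n : ℕ | R.Chain S m m' n}

/-- The ball `B(m, ρ)` of radius `ρ` centred at `m`. -/
noncomputable def ball (R : CellSpace G M) (S : Set G) (m : M) (ρ : ℕ) : Set M :=
  {m' : M | R.dist S m m' ≤ ρ}

/-- The `θ`-interior `A^{-θ}` of `A`. -/
noncomputable def inter (R : CellSpace G M) (S : Set G) (A : Set M) (θ : ℕ) : Set M :=
  {m ∈ A | R.ball S m θ ⊆ A}

/-- The `θ`-closure `A^{+θ}` of `A`. -/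
noncomputable def clos (R : CellSpace G M) (S : Set G) (A : Set M) (θ : ℕ) : Set M :=
  {m : M | (R.ball S m θ ∩ A).Nonempty}

/-- The external `θ`-boundary `∂θ⁺A = A^{+θ} ∖ A`. -/
noncomputable def extB (R : CellSpace G M) (S : Set G) (A : Set M) (θ : ℕ) : Set M :=
  R.clos S A θ \ A

/-- The internal `θ`-boundary `∂θ⁻A = A ∖ A^{-θ}`. -/
noncomputable def intB (R : CellSpace G M) (S : Set G) (A : Set M) (θ : ℕ) : Set M :=
  A \ R.inter S A θ

/-- The `θ`-boundary `∂θA = A^{+θ} ∖ A^{-θ}`. -/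
noncomputable def bdry (R : CellSpace G M) (S : Set G) (A : Set M) (θ : ℕ) : Set M :=
  R.clos S A θ \ R.inter S A θ

end CellSpace

/-- The set `X_A` of restrictions to `A` of the elements of `X`. -/
def restr (A : Set M) (X : Set (M → Q)) : Set (A → Q) :=
  (fun x : M → Q => A.restrict x) '' X

/-- The pattern `p` (with domain `A`) semi-occurs in the configuration `c`:
there is `h ∈ H` with `h ⊛ p = c↾_{h ▷ dom p}`. -/
def SemiOccurs (R : CellSpace G M) (H : Subgroup G) {A : Set M} (p : A → Q)
    (c : M → Q) : Prop :=
  ∃ h ∈ H, ∀ a : A, c (R.act h ↑a) = p a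

/-- The pattern `p` (with domain `A`) occurs at `t` in the configuration `c`:
`t ⊛' p = c↾_{t ↝ A}`. -/
def OccursAt (R : CellSpace G M) {A : Set M} (p : A → Q) (t : M) (c : M → Q) : Prop :=
  ∀ a : A, c (R.nAct t ↑a) = p a

/-- The pattern `p` is allowed in `X`: it semi-occurs in some point of `X`. -/
def Allowed (R : CellSpace G M) (H : Subgroup G) (X : Set (M → Q)) {A : Set M}
    (p : A → Q) : Prop :=
  ∃ x ∈ X, SemiOccurs R H p x

/-- The set `⟨𝔉⟩` generated by a set `𝔉` of forbidden patterns. -/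
def Generated (R : CellSpace G M) (H : Subgroup G) (𝔉 : Set (Σ A : Set M, A → Q)) :
    Set (M → Q) :=
  {c : M → Q | ∀ f ∈ 𝔉, ¬ SemiOccurs R H f.2 c}

/-- `X` is a subshift of `Q^M`: it is generated by a set of blocks. -/
def IsSubshift (R : CellSpace G M) (H : Subgroup G) (X : Set (M → Q)) : Prop :=
  ∃ 𝔉 : Set (Σ A : Set M, A → Q), (∀ f ∈ 𝔉, f.1.Finite) ∧ X = Generated R H 𝔉

/-- `X` is a subshift of finite type: it is generated by a finite set of blocks. -/
def IsSubshiftFT (R : CellSpace G M) (H : Subgroup G) (X : Set (M → Q)) : Prop :=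
  ∃ 𝔉 : Set (Σ A : Set M, A → Q), 𝔉.Finite ∧ (∀ f ∈ 𝔉, f.1.Finite) ∧
    X = Generated R H 𝔉

/-- `X` is a `κ`-step subshift: it is generated by a set of `B(κ)`-blocks. -/
def IsStep (R : CellSpace G M) (S : Set G) (H : Subgroup G) (X : Set (M → Q))
    (κ : ℕ) : Prop :=
  ∃ 𝔉 : Set (Σ A : Set M, A → Q), (∀ f ∈ 𝔉, f.1 = R.ball S R.m0 κ) ∧
    X = Generated R H 𝔉

/-- `X` is `κ`-strongly irreducible. -/
def IsStronglyIrr (R : CellSpace G M) (S : Set G) (H : Subgroup G)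
    (X : Set (M → Q)) (κ : ℕ) : Prop :=
  ∀ (A B : Set M), A.Finite → B.Finite → ∀ (p : A → Q) (p' : B → Q),
    Allowed R H X p → Allowed R H X p' →
    (∀ a ∈ A, ∀ b ∈ B, κ + 1 ≤ R.dist S a b) →
    ∃ x ∈ X, A.restrict x = p ∧ B.restrict x = p'

/-- `X` has `ρ`-bounded propagation. -/
def HasBoundedProp (R : CellSpace G M) (S : Set G) (X : Set (M → Q)) (ρ : ℕ) : Prop :=
  ∀ F : Set M, F.Finite → ∀ p : F → Q,
    (∀ f ∈ F, ∃ x ∈ X, ∀ (m : M) (hm : m ∈ R.ball S f ρ ∩ F), p ⟨m, hm.2⟩ = x m) →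
    ∃ x ∈ X, F.restrict x = p

/-- `Δ` is a `κ`-local map from `X` to `Y`. -/
def IsLocalMap (R : CellSpace G M) (S : Set G) (H : Subgroup G)
    (X Y : Set (M → Q)) (Δ : (M → Q) → (M → Q)) (κ : ℕ) : Prop :=
  Set.MapsTo Δ X Y ∧
  ∃ N : Set M, N ⊆ R.ball S R.m0 κ ∧
    (∀ g₀ : G, R.stab g₀ → ∀ n ∈ N, R.act g₀ n ∈ N) ∧
    ∃ δ : (N → Q) → Q,
      (∀ h₀ ∈ H, R.stab h₀ →
        ∀ ℓ ∈ restr N X, ∀ ℓ' : N → Q,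
          (∀ (n : M) (hn : n ∈ N) (hn' : R.act h₀⁻¹ n ∈ N),
            ℓ' ⟨n, hn⟩ = ℓ ⟨R.act h₀⁻¹ n, hn'⟩) →
          δ ℓ' = δ ℓ) ∧
      ∀ x ∈ X, ∀ m : M, Δ x m = δ (fun n : N => x (R.nAct m ↑n))

/-- `Δ` is pre-injective on `X`. -/
def PreInjective (X : Set (M → Q)) (Δ : (M → Q) → (M → Q)) : Prop :=
  ∀ x ∈ X, ∀ x' ∈ X, Δ x = Δ x' → {m : M | x m ≠ x' m}.Finite → x = x'

/-- The cell space `R` is right amenable: there is a finitely additive probability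
measure on the power set of `M` that is semi-invariant under the right semi-action. -/
def RightAmenable (R : CellSpace G M) : Prop :=
  ∃ μ : Set M → ℝ, (∀ A : Set M, 0 ≤ μ A) ∧ μ Set.univ = 1 ∧
    (∀ A B : Set M, Disjoint A B → μ (A ∪ B) = μ A + μ B) ∧
    ∀ (g : G) (A : Set M), Set.InjOn (fun m => R.sAct m g) A →
      μ ((fun m => R.sAct m g) '' A) = μ A

/-- `F` is a right Følner net in `R` (indexed by the directed set `I`). -/
def IsFolnerNet (R : CellSpace G M) (S : Set G) {I : Type*} [Preorder I]
    (F : I → Set M) : Prop :=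
  (∀ i, (F i).Nonempty) ∧ (∀ i, (F i).Finite) ∧
  ∀ ρ : ℕ, Tendsto (fun i => ((R.bdry S (F i) ρ).ncard : ℝ) / ((F i).ncard : ℝ))
    atTop (nhds 0)

/-- The entropy of `X ⊆ Q^M` with respect to the net `F`:
`limsup_i log|X_{F_i}| / |F_i|`. -/
noncomputable def entropy (R : CellSpace G M) (S : Set G) {I : Type*} [Preorder I]
    (F : I → Set M) (X : Set (M → Q)) : ℝ :=
  limsup (fun i => Real.log ((restr (F i) X).ncard : ℝ) / ((F i).ncard : ℝ)) atTop

/-- `T` is a `⟨θ, κ, θ'⟩`-tiling of `R`. -/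
def IsTiling (R : CellSpace G M) (S : Set G) (θ κ θ' : ℕ) (T : Set M) : Prop :=
  (∀ t ∈ T, ∀ t' ∈ T, t ≠ t' →
    ∀ a ∈ R.ball S t θ, ∀ b ∈ R.ball S t' θ, κ + 1 ≤ R.dist S a b) ∧
  ∀ m : M, ∃ t ∈ T, m ∈ R.ball S t θ'

/-- The action `h ⊛ c` of `h ∈ G` on configurations: `(h ⊛ c)(m) = c(h⁻¹ ▷ m)`. -/
def shiftAct (R : CellSpace G M) (h : G) (c : M → Q) : M → Q :=
  fun m => c (R.act h⁻¹ m)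


section Metric

variable [Group G] (R : CellSpace G M) (S : Set G)

lemma CellSpace.chain_refl (m : M) : R.Chain S m m 0 :=
  ⟨fun _ => m, rfl, rfl, fun i hi => absurd hi (Nat.not_lt_zero i)⟩

lemma CellSpace.chain_concat {m m' m'' : M} {p q : ℕ}
    (h1 : R.Chain S m m' p) (h2 : R.Chain S m' m'' q) : R.Chain S m m'' (p + q) := by
  obtain ⟨f, hf0, hfp, hf⟩ := h1
  obtain ⟨g, hg0, hgq, hg⟩ := h2
  refine ⟨fun i => if i ≤ p then f i else g (i - p), by simp [hf0], ?_, ?_⟩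
  · rcases Nat.eq_zero_or_pos q with hq | hq
    · subst hq
      have : m' = m'' := by rw [← hg0, hgq]
      simp [hfp, this]
    · have hnp : ¬ p + q ≤ p := by omega
      simp only [hnp, if_neg, Nat.add_sub_cancel_left, hgq, if_false]
  · intro i hi
    rcases lt_trichotomy i p with h | h | h
    · obtain ⟨s, hs, hstep⟩ := hf i h
      refine ⟨s, hs, ?_⟩
      beta_reduce
      rw [if_pos (Nat.succ_le_of_lt h), if_pos (Nat.le_of_lt h), hstep]
    · subst h
      obtain ⟨s, hs, hstep⟩ := hg 0 (by omega)
      refine ⟨s, hs, ?_⟩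
      have hni : ¬ i + 1 ≤ i := by omega
      beta_reduce
      rw [if_neg hni, if_pos (le_refl i), Nat.add_sub_cancel_left, hstep, hg0, hfp]
    · obtain ⟨s, hs, hstep⟩ := hg (i - p) (by omega)
      refine ⟨s, hs, ?_⟩
      have h1 : ¬ i + 1 ≤ p := by omega
      have h2 : ¬ i ≤ p := by omega
      have h3 : i + 1 - p = (i - p) + 1 := by omega
      beta_reduce
      rw [if_neg h1, if_neg h2, h3, hstep]

lemma CellSpace.stab_inv {g : G} (hg : R.stab g) : R.stab g⁻¹ := by
  unfold CellSpace.stab at *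
  conv_lhs => rw [← hg]
  rw [← R.mul_act, inv_mul_cancel, R.one_act]

lemma CellSpace.step_back (hS : R.IsRightGenSet S) {m : M} {s : G} (hs : s ∈ S) :
    ∃ s' ∈ S, R.sAct (R.sAct m s) s' = m := by
  set n := R.sAct m s with hn
  have hstab : R.stab ((R.coord m * s)⁻¹ * R.coord n) := by
    unfold CellSpace.stab
    rw [R.mul_act, R.coord_act, hn]
    show R.act (R.coord m * s)⁻¹ (R.act (R.coord m * s) R.m0) = R.m0
    rw [← R.mul_act, inv_mul_cancel, R.one_act]
  refine ⟨((R.coord m * s)⁻¹ * R.coord n)⁻¹ * s⁻¹, hS.stab_mul _ (R.stab_inv hstab) _ (hS.symm s hs), ?_⟩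
  unfold CellSpace.sAct
  have : R.coord n * (((R.coord m * s)⁻¹ * R.coord n)⁻¹ * s⁻¹) = R.coord m := by
    group
  rw [this, R.coord_act]

lemma CellSpace.chain_symm (hS : R.IsRightGenSet S) {m m' : M} {n : ℕ}
    (h : R.Chain S m m' n) : R.Chain S m' m n := by
  induction n generalizing m' with
  | zero =>
    obtain ⟨f, hf0, hfn, _⟩ := h
    rw [← hfn, hf0]
    exact R.chain_refl S m
  | succ n ih =>
    obtain ⟨f, hf0, hfn, hf⟩ := h
    obtain ⟨s, hs, hstep⟩ := hf n (by omega)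
    have hmid : R.Chain S m (f n) n := ⟨f, hf0, rfl, fun i hi => hf i (by omega)⟩
    obtain ⟨s', hs', hback⟩ := R.step_back S (m := f n) hS hs
    have hm' : R.sAct m' s' = f n := by rw [← hfn, hstep]; exact hback
    have h1 : R.Chain S m' (f n) 1 := by
      refine ⟨fun i => if i = 0 then m' else f n, by simp, by simp, ?_⟩
      intro i hi
      interval_cases i
      exact ⟨s', hs', by simpa using hm'.symm⟩
    have := R.chain_concat S h1 (ih hmid)
    rwa [Nat.add_comm] at this

lemma CellSpace.exists_chain (hS : R.IsRightGenSet S) (m m' : M) :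
    ∃ n, R.Chain S m m' n := by
  obtain ⟨k, f, hf0, hfk, hf⟩ := hS.generates m
  obtain ⟨k', f', hf0', hfk', hf'⟩ := hS.generates m'
  exact ⟨k + k', R.chain_concat S (R.chain_symm S hS ⟨f, hf0, hfk, hf⟩) ⟨f', hf0', hfk', hf'⟩⟩

lemma CellSpace.dist_le_of_chain {m m' : M} {n : ℕ} (h : R.Chain S m m' n) :
    R.dist S m m' ≤ n := Nat.sInf_le h

lemma CellSpace.chain_dist (hS : R.IsRightGenSet S) (m m' : M) :
    R.Chain S m m' (R.dist S m m') := by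
  have hne : {n : ℕ | R.Chain S m m' n}.Nonempty := R.exists_chain S hS m m'
  exact Nat.sInf_mem hne

lemma CellSpace.dist_self (m : M) : R.dist S m m = 0 :=
  Nat.le_zero.mp (R.dist_le_of_chain S (R.chain_refl S m))

lemma CellSpace.dist_triangle (hS : R.IsRightGenSet S) (m m' m'' : M) :
    R.dist S m m'' ≤ R.dist S m m' + R.dist S m' m'' :=
  R.dist_le_of_chain S (R.chain_concat S (R.chain_dist S hS m m') (R.chain_dist S hS m' m''))

lemma CellSpace.dist_symm (hS : R.IsRightGenSet S) (m m' : M) :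
    R.dist S m m' = R.dist S m' m := by
  have h1 : ∀ a b : M, R.dist S a b ≤ R.dist S b a := fun a b =>
    R.dist_le_of_chain S (R.chain_symm S hS (R.chain_dist S hS b a))
  exact le_antisymm (h1 m m') (h1 m' m)

lemma CellSpace.eq_of_dist_eq_zero (hS : R.IsRightGenSet S) {m m' : M}
    (h : R.dist S m m' = 0) : m = m' := by
  have := R.chain_dist S hS m m'
  rw [h] at this
  obtain ⟨f, hf0, hfn, _⟩ := this
  rw [← hf0, hfn]

lemma CellSpace.mem_ball_self (m : M) (ρ : ℕ) : m ∈ R.ball S m ρ := by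
  show R.dist S m m ≤ ρ
  rw [R.dist_self S]
  exact Nat.zero_le ρ

lemma CellSpace.ball_mono {ρ ρ' : ℕ} (h : ρ ≤ ρ') (m : M) :
    R.ball S m ρ ⊆ R.ball S m ρ' := fun m' hm' => le_trans hm' h

lemma CellSpace.ball_zero (hS : R.IsRightGenSet S) (m : M) : R.ball S m 0 = {m} := by
  ext m'
  constructor
  · intro h
    exact (R.eq_of_dist_eq_zero S hS (Nat.le_zero.mp h)).symm
  · intro h
    rw [Set.mem_singleton_iff] at h
    rw [h]
    exact R.mem_ball_self S m 0

lemma ncard_biUnion_le {α β : Type*} (s : Finset α) (f : α → Set β)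
    (hf : ∀ a ∈ s, (f a).Finite) :
    (⋃ a ∈ s, f a).ncard ≤ ∑ a ∈ s, (f a).ncard := by
  classical
  induction s using Finset.induction with
  | empty => simp
  | insert _ _ hnotmem ih =>
    rename_i a s
    rw [Finset.set_biUnion_insert, Finset.sum_insert hnotmem]
    calc (f a ∪ ⋃ x ∈ s, f x).ncard
        ≤ (f a).ncard + (⋃ x ∈ s, f x).ncard := Set.ncard_union_le _ _
      _ ≤ (f a).ncard + ∑ x ∈ s, (f x).ncard := by
          exact Nat.add_le_add_left (ih (fun x hx => hf x (Finset.mem_insert_of_mem hx))) _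

lemma CellSpace.ball_finite_card (hS : R.IsRightGenSet S) (m : M) (ρ : ℕ) :
    (R.ball S m ρ).Finite ∧ (R.ball S m ρ).ncard ≤ (S.ncard + 1) ^ ρ := by
  classical
  induction ρ with
  | zero =>
    rw [R.ball_zero S hS m]
    simp
  | succ ρ ih =>
    obtain ⟨hfin, hcard⟩ := ih
    have hsub : R.ball S m (ρ + 1) ⊆ ⋃ x ∈ hfin.toFinset, insert x ((fun s => R.sAct x s) '' S) := by
      intro m' hm'
      have hd : R.dist S m m' ≤ ρ + 1 := hm'
      have hch : R.Chain S m m' (R.dist S m m') := R.chain_dist S hS m m'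
      rcases Nat.eq_zero_or_eq_succ_pred (R.dist S m m') with h0 | hsucc
      · have : m' = m := (R.eq_of_dist_eq_zero S hS h0).symm
        subst this
        refine Set.mem_biUnion (x := m') ?_ (Set.mem_insert _ _)
        show m' ∈ (hfin.toFinset : Set M)
        simp only [Finset.coe_sort_coe, Set.Finite.coe_toFinset]
        exact R.mem_ball_self S m' ρ
      · set k := R.dist S m m' with hk
        obtain ⟨f, hf0, hfk, hf⟩ := hch
        set j := k - 1 with hj
        have hkj : k = j + 1 := by omega
        have hmid : R.Chain S m (f j) j := ⟨f, hf0, rfl, fun i hi => hf i (by omega)⟩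
        have hmidball : f j ∈ R.ball S m ρ := le_trans (R.dist_le_of_chain S hmid) (by omega)
        obtain ⟨s, hs, hstep⟩ := hf j (by omega)
        refine Set.mem_biUnion (x := f j) ?_ ?_
        · show f j ∈ (hfin.toFinset : Set M)
          simp only [Finset.coe_sort_coe, Set.Finite.coe_toFinset]
          exact hmidball
        · refine Set.mem_insert_iff.mpr (Or.inr ?_)
          exact ⟨s, hs, by show R.sAct (f j) s = m'; rw [← hstep, ← hkj, hfk]⟩
    have hfin' : (⋃ x ∈ hfin.toFinset, insert x ((fun s => R.sAct x s) '' S)).Finite := by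
      apply Set.Finite.biUnion (hfin.toFinset : Finset M).finite_toSet
      intro i _
      exact Set.Finite.insert i (Set.Finite.image _ hS.finite)
    refine ⟨hfin'.subset hsub, ?_⟩
    calc (R.ball S m (ρ + 1)).ncard
        ≤ (⋃ x ∈ hfin.toFinset, insert x ((fun s => R.sAct x s) '' S)).ncard :=
          Set.ncard_le_ncard hsub hfin'
      _ ≤ ∑ x ∈ hfin.toFinset, (insert x ((fun s => R.sAct x s) '' S)).ncard :=
          ncard_biUnion_le _ _ (fun a _ => Set.Finite.insert a (Set.Finite.image _ hS.finite))
      _ ≤ ∑ _x ∈ hfin.toFinset, (S.ncard + 1) := by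
          apply Finset.sum_le_sum
          intro x _
          calc (insert x ((fun s => R.sAct x s) '' S)).ncard
              ≤ ((fun s => R.sAct x s) '' S).ncard + 1 :=
                Set.ncard_insert_le _ _
            _ ≤ S.ncard + 1 := by
                exact Nat.add_le_add_right (Set.ncard_image_le hS.finite) 1
      _ = hfin.toFinset.card * (S.ncard + 1) := by rw [Finset.sum_const, smul_eq_mul]
      _ ≤ (S.ncard + 1) ^ ρ * (S.ncard + 1) := by
          apply Nat.mul_le_mul_right
          rw [← Set.ncard_eq_toFinset_card (R.ball S m ρ) hfin]
          exact hcard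
      _ = (S.ncard + 1) ^ (ρ + 1) := by ring

lemma CellSpace.ball_finite (hS : R.IsRightGenSet S) (m : M) (ρ : ℕ) :
    (R.ball S m ρ).Finite := (R.ball_finite_card S hS m ρ).1

lemma CellSpace.clos_finite (hS : R.IsRightGenSet S) {A : Set M} (hA : A.Finite) (ρ : ℕ) :
    (R.clos S A ρ).Finite := by
  have hsub : R.clos S A ρ ⊆ ⋃ a ∈ hA.toFinset, R.ball S a ρ := by
    rintro m ⟨a, ham, haA⟩
    refine Set.mem_biUnion (x := a) (by show a ∈ (hA.toFinset : Set M); simpa using haA) ?_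
    show R.dist S a m ≤ ρ
    rw [← R.dist_symm S hS]
    exact ham
  exact Set.Finite.subset
    (Set.Finite.biUnion (hA.toFinset : Finset M).finite_toSet
      (fun i _ => R.ball_finite S hS i ρ)) hsub

end Metric

section Counting

lemma count_step {α γ : Type*} [DecidableEq γ] (U V : Finset α) (hVU : V ⊆ U) (π : α → γ) (n : ℕ)
    (h1 : ∀ w : γ, (U.filter (fun u => π u = w)).card ≤ n)
    (h2 : ∀ v ∈ V, ∃ u ∈ U, π u = π v ∧ u ∉ V) :
    (n + 1) * V.card ≤ n * U.card := by
  classical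
  set im := V.image π with him
  have hVcard : V.card = ∑ w ∈ im, (V.filter (fun v => π v = w)).card :=
    Finset.card_eq_sum_card_fiberwise (fun v hv => Finset.mem_image_of_mem π hv)
  have hfib : ∀ w ∈ im, (V.filter (fun v => π v = w)).card + 1 ≤ (U.filter (fun u => π u = w)).card := by
    intro w hw
    obtain ⟨v, hv, hπv⟩ := Finset.mem_image.mp hw
    obtain ⟨u, hu, hπu, hunotV⟩ := h2 v hv
    have hss : V.filter (fun v => π v = w) ⊂ U.filter (fun u => π u = w) := by
      refine Finset.ssubset_iff_of_subset (Finset.filter_subset_filter _ hVU) |>.mpr ?_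
      exact ⟨u, Finset.mem_filter.mpr ⟨hu, by rw [hπu, hπv]⟩,
        fun hmem => hunotV (Finset.mem_filter.mp hmem).1⟩
    exact Nat.succ_le_of_lt (Finset.card_lt_card hss)
  have hUsum : ∑ w ∈ im, (U.filter (fun u => π u = w)).card ≤ U.card := by
    have hdisj : ∀ x ∈ im, ∀ y ∈ im, x ≠ y →
        Disjoint (U.filter (fun u => π u = x)) (U.filter (fun u => π u = y)) := by
      intro x _ y _ hxy
      rw [Finset.disjoint_left]
      intro u hux huy
      exact hxy ((Finset.mem_filter.mp hux).2 ▸ (Finset.mem_filter.mp huy).2.symm ▸ rfl)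
    rw [← Finset.card_biUnion hdisj]
    apply Finset.card_le_card
    intro u hu
    obtain ⟨w, _, hw⟩ := Finset.mem_biUnion.mp hu
    exact (Finset.mem_filter.mp hw).1
  have hVn : V.card ≤ n * im.card := by
    rw [hVcard]
    calc ∑ w ∈ im, (V.filter (fun v => π v = w)).card
        ≤ ∑ _w ∈ im, n := Finset.sum_le_sum (fun w hw =>
          le_trans (Finset.card_le_card (Finset.filter_subset_filter _ hVU)) (h1 w))
      _ = im.card * n := by rw [Finset.sum_const, smul_eq_mul]
      _ = n * im.card := Nat.mul_comm _ _
  calc (n + 1) * V.card = n * V.card + V.card := by ring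
    _ ≤ n * V.card + n * im.card := Nat.add_le_add_left hVn _
    _ = n * (V.card + im.card) := by ring
    _ = n * (∑ w ∈ im, ((V.filter (fun v => π v = w)).card + 1)) := by
        rw [Finset.sum_add_distrib, Finset.sum_const, smul_eq_mul, Nat.mul_one, ← hVcard]
    _ ≤ n * (∑ w ∈ im, (U.filter (fun u => π u = w)).card) :=
        Nat.mul_le_mul_left n (Finset.sum_le_sum hfib)
    _ ≤ n * U.card := Nat.mul_le_mul_left n hUsum

end Counting

section Main

variable [Group G] (R : CellSpace G M) (S : Set G)

/-- Configurations in `X` whose restriction to each tile ball listed in `l` is a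
restriction of an element of `Y`. -/
def ZSet (R : CellSpace G M) (S : Set G) (X Y : Set (M → Q)) (θ : ℕ) (l : List M) :
    Set (M → Q) :=
  {x ∈ X | ∀ t ∈ l, (R.ball S t θ).restrict x ∈ restr (R.ball S t θ) Y}

lemma ZSet_nil (X Y : Set (M → Q)) (θ : ℕ) : ZSet R S X Y θ [] = X := by
  ext x; simp [ZSet]

lemma allowed_restrict (H : Subgroup G) (X : Set (M → Q)) {x : M → Q} (hx : x ∈ X)
    (A : Set M) : Allowed R H X (A.restrict x) :=
  ⟨x, hx, 1, H.one_mem, fun a => by rw [R.one_act]; rfl⟩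

lemma step_count [Finite Q] [Nonempty Q] (hS : R.IsRightGenSet S) (H : Subgroup G)
    (X : Set (M → Q)) (κ : ℕ) (hsi : IsStronglyIrr R S H X κ)
    (Y : Set (M → Q)) (hYX : Y ⊆ X)
    (θ θ' : ℕ) (T : Set M) (hT : IsTiling R S θ κ θ' T)
    (hprop : ∀ t ∈ T, restr (R.ball S t θ) Y ⊂ restr (R.ball S t θ) X)
    (Ω : Set M) (hΩ : Ω.Finite) (t : M) (ht : t ∈ T) (htΩ : R.ball S t θ ⊆ Ω)
    (l : List M) (htl : t ∉ l) (hl : ∀ t' ∈ l, t' ∈ T ∧ R.ball S t' θ ⊆ Ω) :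
    (Nat.card Q ^ ((S.ncard + 1) ^ (θ + κ)) + 1) * (restr Ω (ZSet R S X Y θ (t :: l))).ncard ≤
      Nat.card Q ^ ((S.ncard + 1) ^ (θ + κ)) * (restr Ω (ZSet R S X Y θ l)).ncard := by
  classical
  haveI := hΩ.to_subtype
  set q := Nat.card Q with hq
  set C := q ^ ((S.ncard + 1) ^ (θ + κ)) with hC
  set Bt := R.ball S t θ with hBt
  set Bplus := {m : M | ∃ b ∈ Bt, R.dist S m b ≤ κ} with hBplus
  set A := Ω \ Bplus with hA
  have hAΩ : A ⊆ Ω := Set.diff_subset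
  -- the projection
  set π : (↥Ω → Q) → (↥A → Q) := fun u a => u ⟨a.1, hAΩ a.2⟩ with hπ
  have hUfin : (restr Ω (ZSet R S X Y θ l)).Finite := Set.toFinite _
  have hVfin : (restr Ω (ZSet R S X Y θ (t :: l))).Finite := Set.toFinite _
  set UF := hUfin.toFinset with hUF
  set VF := hVfin.toFinset with hVF
  have hVU : VF ⊆ UF := by
    intro v hv
    rw [hVF, Set.Finite.mem_toFinset] at hv
    rw [hUF, Set.Finite.mem_toFinset]
    obtain ⟨x, hx, hxr⟩ := hv
    exact ⟨x, ⟨hx.1, fun t' ht' => hx.2 t' (List.mem_cons_of_mem t ht')⟩, hxr⟩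
  -- the missing pattern
  obtain ⟨pt, hptX, hptY⟩ := Set.exists_of_ssubset (hprop t ht)
  -- fiber bound
  have h1 : ∀ w : ↥A → Q, (UF.filter (fun u => π u = w)).card ≤ C := by
    intro w
    set AB := Ω ∩ Bplus with hAB
    have hABfin : AB.Finite := hΩ.inter_of_left _
    haveI := hABfin.to_subtype
    haveI : Fintype (↥AB → Q) := Fintype.ofFinite _
    set j : (↥Ω → Q) → (↥AB → Q) := fun u a => u ⟨a.1, a.2.1⟩ with hj
    have hinj : Set.InjOn j (UF.filter (fun u => π u = w) : Finset (↥Ω → Q)) := by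
      intro u hu u' hu' hjuu'
      rw [Finset.mem_coe, Finset.mem_filter] at hu hu'
      funext ω
      by_cases hb : ω.1 ∈ Bplus
      · exact congrFun hjuu' ⟨ω.1, ⟨ω.2, hb⟩⟩
      · have := congrFun (hu.2.trans hu'.2.symm) ⟨ω.1, ⟨ω.2, hb⟩⟩
        exact this
    calc (UF.filter (fun u => π u = w)).card
        ≤ (Finset.univ : Finset (↥AB → Q)).card := by
          apply Finset.card_le_card_of_injOn j (fun _ _ => Finset.mem_univ _)
          intro u hu u' hu' h
          exact hinj (by simpa using hu) (by simpa using hu') h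
      _ = Nat.card (↥AB → Q) := by rw [Finset.card_univ, Nat.card_eq_fintype_card]
      _ = q ^ AB.ncard := by rw [Nat.card_fun, hq, Nat.card_coe_set_eq]
      _ ≤ C := by
          rw [hC]
          apply Nat.pow_le_pow_right Nat.card_pos
          have hsub : AB ⊆ R.ball S t (θ + κ) := by
            rintro m ⟨_, b, hb, hmb⟩
            show R.dist S t m ≤ θ + κ
            calc R.dist S t m ≤ R.dist S t b + R.dist S b m := R.dist_triangle S hS t b m
              _ = R.dist S t b + R.dist S m b := by rw [R.dist_symm S hS b m]
              _ ≤ θ + κ := Nat.add_le_add hb hmb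
          calc AB.ncard ≤ (R.ball S t (θ + κ)).ncard :=
                Set.ncard_le_ncard hsub (R.ball_finite S hS t (θ + κ))
            _ ≤ (S.ncard + 1) ^ (θ + κ) := (R.ball_finite_card S hS t (θ + κ)).2
  -- escape elements
  have h2 : ∀ v ∈ VF, ∃ u ∈ UF, π u = π v ∧ u ∉ VF := by
    intro v hv
    rw [hVF, Set.Finite.mem_toFinset] at hv
    obtain ⟨x, hx, hxr⟩ := hv
    have hxX : x ∈ X := hx.1
    have hAfar : ∀ a ∈ A, ∀ b ∈ Bt, κ + 1 ≤ R.dist S a b := by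
      intro a ha b hb
      by_contra hcon
      exact ha.2 ⟨b, hb, by omega⟩
    obtain ⟨pb, hpbX, hpbr⟩ := hptX
    obtain ⟨xs, hxsX, hxsA, hxsB⟩ := hsi A Bt (hΩ.subset hAΩ) (R.ball_finite S hS t θ)
      (A.restrict x) pt (allowed_restrict R H X hxX A)
      ⟨pb, hpbX, 1, H.one_mem, fun a => by rw [R.one_act]; exact congrFun hpbr a⟩
      hAfar
    refine ⟨Ω.restrict xs, ?_, ?_, ?_⟩
    · rw [hUF, Set.Finite.mem_toFinset]
      refine ⟨xs, ⟨hxsX, fun t' ht' => ?_⟩, rfl⟩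
      have hBt' : R.ball S t' θ ⊆ A := by
        intro b hb
        refine ⟨(hl t' ht').2 hb, fun hbp => ?_⟩
        obtain ⟨b₂, hb₂, hdb⟩ := hbp
        have hne : t' ≠ t := fun h => htl (h ▸ ht')
        have := hT.1 t' (hl t' ht').1 t ht hne b hb b₂ hb₂
        omega
      have hrw : (R.ball S t' θ).restrict xs = (R.ball S t' θ).restrict x := by
        funext b
        exact congrFun hxsA ⟨b.1, hBt' b.2⟩
      rw [hrw]
      exact hx.2 t' (List.mem_cons_of_mem t ht')
    · funext a
      rw [← hxr]
      exact congrFun hxsA a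
    · intro hmem
      rw [hVF, Set.Finite.mem_toFinset] at hmem
      obtain ⟨y, hy, hyr⟩ := hmem
      apply hptY
      have : Bt.restrict y = pt := by
        funext b
        have h1 : y b.1 = xs b.1 := congrFun hyr ⟨b.1, htΩ b.2⟩
        rw [show (Bt.restrict y) b = y b.1 from rfl, h1]
        exact congrFun hxsB b
      rw [← this]
      exact hy.2 t List.mem_cons_self
  have := count_step UF VF hVU π C h1 h2
  rwa [hUF, hVF, ← Set.ncard_eq_toFinset_card _ hUfin, ← Set.ncard_eq_toFinset_card _ hVfin]
    at this

lemma chain_count [Finite Q] [Nonempty Q] (hS : R.IsRightGenSet S) (H : Subgroup G)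
    (X : Set (M → Q)) (κ : ℕ) (hsi : IsStronglyIrr R S H X κ)
    (Y : Set (M → Q)) (hYX : Y ⊆ X)
    (θ θ' : ℕ) (T : Set M) (hT : IsTiling R S θ κ θ' T)
    (hprop : ∀ t ∈ T, restr (R.ball S t θ) Y ⊂ restr (R.ball S t θ) X)
    (Ω : Set M) (hΩ : Ω.Finite) (l : List M) (hnd : l.Nodup)
    (hl : ∀ t' ∈ l, t' ∈ T ∧ R.ball S t' θ ⊆ Ω) :
    (Nat.card Q ^ ((S.ncard + 1) ^ (θ + κ)) + 1) ^ l.length *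
        (restr Ω (ZSet R S X Y θ l)).ncard ≤
      (Nat.card Q ^ ((S.ncard + 1) ^ (θ + κ))) ^ l.length * (restr Ω X).ncard := by
  set C := Nat.card Q ^ ((S.ncard + 1) ^ (θ + κ)) with hC
  induction l with
  | nil => simp [ZSet_nil]
  | cons t l ih =>
    have hnd' : l.Nodup := (List.nodup_cons.mp hnd).2
    have htl : t ∉ l := (List.nodup_cons.mp hnd).1
    have hl' : ∀ t' ∈ l, t' ∈ T ∧ R.ball S t' θ ⊆ Ω :=
      fun t' ht' => hl t' (List.mem_cons_of_mem t ht')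
    have hstep := step_count R S hS H X κ hsi Y hYX θ θ' T hT hprop Ω hΩ t
      (hl t List.mem_cons_self).1 (hl t List.mem_cons_self).2 l htl hl'
    calc (C + 1) ^ (t :: l).length * (restr Ω (ZSet R S X Y θ (t :: l))).ncard
        = (C + 1) ^ l.length * ((C + 1) * (restr Ω (ZSet R S X Y θ (t :: l))).ncard) := by
          rw [List.length_cons]; ring
      _ ≤ (C + 1) ^ l.length * (C * (restr Ω (ZSet R S X Y θ l)).ncard) :=
          Nat.mul_le_mul_left _ hstep
      _ = C * ((C + 1) ^ l.length * (restr Ω (ZSet R S X Y θ l)).ncard) := by ring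
      _ ≤ C * (C ^ l.length * (restr Ω X).ncard) :=
          Nat.mul_le_mul_left _ (ih hnd' hl')
      _ = C ^ (t :: l).length * (restr Ω X).ncard := by rw [List.length_cons]; ring

lemma main_count [Finite Q] [Nonempty Q] (hS : R.IsRightGenSet S) (H : Subgroup G)
    (X : Set (M → Q)) (κ : ℕ) (hsi : IsStronglyIrr R S H X κ)
    (Y : Set (M → Q)) (hYX : Y ⊆ X)
    (θ θ' : ℕ) (T : Set M) (hT : IsTiling R S θ κ θ' T)
    (hprop : ∀ t ∈ T, restr (R.ball S t θ) Y ⊂ restr (R.ball S t θ) X)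
    (Ω : Set M) (hΩ : Ω.Finite) :
    (Nat.card Q ^ ((S.ncard + 1) ^ (θ + κ)) + 1) ^ ({t ∈ T | R.ball S t θ ⊆ Ω}.ncard) *
        (restr Ω Y).ncard ≤
      (Nat.card Q ^ ((S.ncard + 1) ^ (θ + κ))) ^ ({t ∈ T | R.ball S t θ ⊆ Ω}.ncard) *
        (restr Ω X).ncard := by
  classical
  haveI := hΩ.to_subtype
  have hTΩfin : {t ∈ T | R.ball S t θ ⊆ Ω}.Finite :=
    hΩ.subset (fun t ht => ht.2 (R.mem_ball_self S t θ))
  set l := hTΩfin.toFinset.toList with hld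
  have hlen : l.length = {t ∈ T | R.ball S t θ ⊆ Ω}.ncard := by
    rw [hld, Finset.length_toList, ← Set.ncard_eq_toFinset_card _ hTΩfin]
  have hmem : ∀ t' ∈ l, t' ∈ T ∧ R.ball S t' θ ⊆ Ω := by
    intro t' ht'
    rw [hld, Finset.mem_toList, Set.Finite.mem_toFinset] at ht'
    exact ⟨ht'.1, ht'.2⟩
  have hYZ : restr Ω Y ⊆ restr Ω (ZSet R S X Y θ l) := by
    apply Set.image_mono
    intro y hy
    exact ⟨hYX hy, fun t' _ => ⟨y, hy, rfl⟩⟩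
  have hYle : (restr Ω Y).ncard ≤ (restr Ω (ZSet R S X Y θ l)).ncard :=
    Set.ncard_le_ncard hYZ (Set.toFinite _)
  calc (Nat.card Q ^ ((S.ncard + 1) ^ (θ + κ)) + 1) ^ ({t ∈ T | R.ball S t θ ⊆ Ω}.ncard) *
        (restr Ω Y).ncard
      ≤ (Nat.card Q ^ ((S.ncard + 1) ^ (θ + κ)) + 1) ^ l.length *
        (restr Ω (ZSet R S X Y θ l)).ncard := by
        rw [hlen]
        exact Nat.mul_le_mul_left _ hYle
    _ ≤ (Nat.card Q ^ ((S.ncard + 1) ^ (θ + κ))) ^ l.length * (restr Ω X).ncard :=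
        chain_count R S hS H X κ hsi Y hYX θ θ' T hT hprop Ω hΩ l
          (by rw [hld]; exact Finset.nodup_toList _) hmem
    _ = (Nat.card Q ^ ((S.ncard + 1) ^ (θ + κ))) ^ ({t ∈ T | R.ball S t θ ⊆ Ω}.ncard) *
        (restr Ω X).ncard := by rw [hlen]

lemma tiles_lower (hS : R.IsRightGenSet S)
    (θ θ' κ : ℕ) (T : Set M) (hT : IsTiling R S θ κ θ' T)
    (Ω : Set M) (hΩ : Ω.Finite) :
    Ω.ncard ≤ {t ∈ T | R.ball S t θ ⊆ Ω}.ncard * (S.ncard + 1) ^ θ' +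
      (R.bdry S Ω (θ + θ')).ncard := by
  classical
  have hTΩfin : {t ∈ T | R.ball S t θ ⊆ Ω}.Finite :=
    hΩ.subset (fun t ht => ht.2 (R.mem_ball_self S t θ))
  have hcov : R.inter S Ω (θ + θ') ⊆ ⋃ t ∈ hTΩfin.toFinset, R.ball S t θ' := by
    intro m hm
    obtain ⟨t, ht, hmt⟩ := hT.2 m
    have htm : R.dist S t m ≤ θ' := hmt
    have hball : R.ball S t θ ⊆ Ω := by
      intro b hb
      apply hm.2
      show R.dist S m b ≤ θ + θ'
      calc R.dist S m b ≤ R.dist S m t + R.dist S t b := R.dist_triangle S hS m t b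
        _ = R.dist S t m + R.dist S t b := by rw [R.dist_symm S hS m t]
        _ ≤ θ' + θ := Nat.add_le_add htm hb
        _ = θ + θ' := Nat.add_comm _ _
    refine Set.mem_biUnion (x := t) ?_ hmt
    show t ∈ (hTΩfin.toFinset : Set M)
    simp only [Finset.coe_sort_coe, Set.Finite.coe_toFinset]
    exact ⟨ht, hball⟩
  have hinter_le : (R.inter S Ω (θ + θ')).ncard ≤
      {t ∈ T | R.ball S t θ ⊆ Ω}.ncard * (S.ncard + 1) ^ θ' := by
    calc (R.inter S Ω (θ + θ')).ncard
        ≤ (⋃ t ∈ hTΩfin.toFinset, R.ball S t θ').ncard :=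
          Set.ncard_le_ncard hcov (Set.Finite.biUnion (hTΩfin.toFinset : Finset M).finite_toSet
            (fun i _ => R.ball_finite S hS i θ'))
      _ ≤ ∑ t ∈ hTΩfin.toFinset, (R.ball S t θ').ncard :=
          ncard_biUnion_le _ _ (fun a _ => R.ball_finite S hS a θ')
      _ ≤ ∑ _t ∈ hTΩfin.toFinset, (S.ncard + 1) ^ θ' :=
          Finset.sum_le_sum (fun t _ => (R.ball_finite_card S hS t θ').2)
      _ = hTΩfin.toFinset.card * (S.ncard + 1) ^ θ' := by
          rw [Finset.sum_const, smul_eq_mul]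
      _ = {t ∈ T | R.ball S t θ ⊆ Ω}.ncard * (S.ncard + 1) ^ θ' := by
          rw [← Set.ncard_eq_toFinset_card _ hTΩfin]
  have hbd : Ω \ R.inter S Ω (θ + θ') ⊆ R.bdry S Ω (θ + θ') := by
    intro m hm
    exact ⟨⟨m, R.mem_ball_self S m (θ + θ'), hm.1⟩, hm.2⟩
  have hInterΩ : R.inter S Ω (θ + θ') ⊆ Ω := fun m hm => hm.1
  calc Ω.ncard = (R.inter S Ω (θ + θ') ∪ (Ω \ R.inter S Ω (θ + θ'))).ncard := by
        rw [Set.union_diff_cancel hInterΩ]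
    _ ≤ (R.inter S Ω (θ + θ')).ncard + (Ω \ R.inter S Ω (θ + θ')).ncard :=
        Set.ncard_union_le _ _
    _ ≤ {t ∈ T | R.ball S t θ ⊆ Ω}.ncard * (S.ncard + 1) ^ θ' +
        (R.bdry S Ω (θ + θ')).ncard := by
        exact Nat.add_le_add hinter_le (Set.ncard_le_ncard hbd
          ((R.clos_finite S hS hΩ (θ + θ')).subset Set.diff_subset))
    
lemma two_patterns (hS : R.IsRightGenSet S) (H : Subgroup G) (hH : ∀ m : M, R.coord m ∈ H)
    (X : Set (M → Q)) (κ : ℕ) (hsi : IsStronglyIrr R S H X κ) (hnt : X.Nontrivial)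
    (t : M) (θ : ℕ) :
    ∃ x₁ ∈ X, ∃ x₂ ∈ X, (R.ball S t θ).restrict x₁ ≠ (R.ball S t θ).restrict x₂ := by
  obtain ⟨x, hx, x', hx', hxx'⟩ := hnt
  have : ∃ m : M, x m ≠ x' m := by
    by_contra hcon
    push_neg at hcon
    exact hxx' (funext hcon)
  obtain ⟨m, hm⟩ := this
  set h : G := R.coord m * (R.coord t)⁻¹ with hh
  have hhH : h ∈ H := H.mul_mem (hH m) (H.inv_mem (hH t))
  have hht : R.act h t = m := by
    rw [hh, R.mul_act]
    have key : R.act (R.coord t)⁻¹ (R.act (R.coord t) R.m0) = R.m0 := by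
      rw [← R.mul_act, inv_mul_cancel, R.one_act]
    have h3 : R.act (R.coord t)⁻¹ t = R.m0 := by
      rw [← key, R.coord_act]
    rw [h3, R.coord_act]
  have hall : ∀ z ∈ X, Allowed R H X (fun _ : ↥({t} : Set M) => z m) := by
    intro z hz
    refine ⟨z, hz, h, hhH, fun a => ?_⟩
    have ha : a.1 = t := a.2
    rw [ha, hht]
  obtain ⟨x₁, hx₁, hx₁r, -⟩ := hsi {t} ∅ (Set.finite_singleton t) Set.finite_empty
    (fun _ => x m) (fun a => absurd a.2 (Set.notMem_empty a.1)) (hall x hx)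
    ⟨x, hx, 1, H.one_mem, fun a => absurd a.2 (Set.notMem_empty a.1)⟩
    (fun a _ b hb => absurd hb (Set.notMem_empty b))
  obtain ⟨x₂, hx₂, hx₂r, -⟩ := hsi {t} ∅ (Set.finite_singleton t) Set.finite_empty
    (fun _ => x' m) (fun a => absurd a.2 (Set.notMem_empty a.1)) (hall x' hx')
    ⟨x, hx, 1, H.one_mem, fun a => absurd a.2 (Set.notMem_empty a.1)⟩
    (fun a _ b hb => absurd hb (Set.notMem_empty b))
  refine ⟨x₁, hx₁, x₂, hx₂, fun hcon => ?_⟩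
  have ht : t ∈ R.ball S t θ := R.mem_ball_self S t θ
  have h1 : x₁ t = x m := congrFun hx₁r ⟨t, rfl⟩
  have h2 : x₂ t = x' m := congrFun hx₂r ⟨t, rfl⟩
  have := congrFun hcon ⟨t, ht⟩
  change x₁ t = x₂ t at this
  rw [h1, h2] at this
  exact hm this

end Main

section Final

variable [Group G] (R : CellSpace G M) (S : Set G)

lemma entropy_lt_of_nonempty {I : Type*} [Nonempty I] [SemilatticeSup I]
    [Finite Q] (hS : R.IsRightGenSet S) (H : Subgroup G)
    (F : I → Set M) (hF : IsFolnerNet R S F)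
    (X : Set (M → Q)) (κ : ℕ) (hsi : IsStronglyIrr R S H X κ)
    (Y : Set (M → Q)) (hYX : Y ⊆ X) (hYne : Y.Nonempty)
    (θ θ' : ℕ) (T : Set M) (hT : IsTiling R S θ κ θ' T)
    (hprop : ∀ t ∈ T, restr (R.ball S t θ) Y ⊂ restr (R.ball S t θ) X) :
    entropy R S F Y < entropy R S F X := by
  classical
  obtain ⟨y₀, hy₀⟩ := hYne
  haveI : Nonempty Q := ⟨y₀ R.m0⟩
  set q := Nat.card Q with hqd
  set C := q ^ ((S.ncard + 1) ^ (θ + κ)) with hCd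
  have hq1 : 1 ≤ q := Nat.card_pos
  have hC1 : 1 ≤ C := Nat.one_le_pow _ _ (by omega)
  set β' : ℝ := (((S.ncard + 1) ^ θ' : ℕ) : ℝ) with hβ'd
  have hβ'pos : (0 : ℝ) < β' := by
    rw [hβ'd]
    exact_mod_cast Nat.pos_of_ne_zero (by positivity)
  set γ : ℝ := Real.log (C + 1) - Real.log C with hγd
  have hγpos : 0 < γ := by
    rw [hγd]
    have : Real.log C < Real.log (C + 1) := by
      apply Real.log_lt_log
      · exact_mod_cast hC1
      · exact_mod_cast Nat.lt_succ_self C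
    linarith
  set ε : ℝ := γ / (2 * β') with hεd
  have hεpos : 0 < ε := by positivity
  set fY : I → ℝ := fun i => Real.log ((restr (F i) Y).ncard : ℝ) / ((F i).ncard : ℝ) with hfY
  set fX : I → ℝ := fun i => Real.log ((restr (F i) X).ncard : ℝ) / ((F i).ncard : ℝ) with hfX
  -- pointwise inequality
  have hptwise : ∀ i, fY i ≤ fX i -
      (γ / β') * (1 - ((R.bdry S (F i) (θ + θ')).ncard : ℝ) / ((F i).ncard : ℝ)) := by
    intro i
    have hΩ : (F i).Finite := hF.2.1 i
    haveI := hΩ.to_subtype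
    have hΩne : (F i).Nonempty := hF.1 i
    set k := {t ∈ T | R.ball S t θ ⊆ F i}.ncard with hkd
    set Ny := (restr (F i) Y).ncard with hNyd
    set Nx := (restr (F i) X).ncard with hNxd
    set NΩ := ((F i).ncard : ℝ) with hNΩd
    have hNΩpos : (0 : ℝ) < NΩ := by
      rw [hNΩd]
      exact_mod_cast (Set.ncard_pos hΩ).mpr hΩne
    have hNy1 : 1 ≤ Ny := by
      rw [hNyd]
      exact (Set.ncard_pos (Set.toFinite _)).mpr ⟨(F i).restrict y₀, y₀, hy₀, rfl⟩
    have hNx1 : 1 ≤ Nx := by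
      rw [hNxd]
      exact (Set.ncard_pos (Set.toFinite _)).mpr ⟨(F i).restrict y₀, y₀, hYX hy₀, rfl⟩
    have hmain := main_count R S hS H X κ hsi Y hYX θ θ' T hT hprop (F i) hΩ
    have htiles := tiles_lower R S hS θ θ' κ T hT (F i) hΩ
    -- log inequality
    have hlog : Real.log Ny + k * Real.log (C + 1) ≤ Real.log Nx + k * Real.log C := by
      have hcast : ((C + 1 : ℕ) : ℝ) ^ k * (Ny : ℝ) ≤ ((C : ℕ) : ℝ) ^ k * (Nx : ℝ) := by
        exact_mod_cast hmain
      have hposL : (0 : ℝ) < ((C + 1 : ℕ) : ℝ) ^ k * (Ny : ℝ) := by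
        apply mul_pos
        · positivity
        · exact_mod_cast hNy1
      have := Real.log_le_log hposL hcast
      have hNyne : ((Ny : ℕ) : ℝ) ≠ 0 := by
        have : (0:ℝ) < (Ny : ℝ) := by exact_mod_cast hNy1
        exact this.ne'
      rw [Real.log_mul (by positivity) hNyne,
        Real.log_mul (by positivity) (by
          have : (0:ℝ) < (Nx : ℝ) := by exact_mod_cast hNx1
          exact this.ne'),
        Real.log_pow, Real.log_pow] at this
      push_cast at this ⊢
      linarith
    -- divide by NΩ
    have hlog2 : Real.log (Ny : ℝ) ≤ Real.log (Nx : ℝ) - γ * k := by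
      rw [hγd]; nlinarith [hlog]
    have hstep : Real.log (Ny : ℝ) / NΩ ≤ (Real.log (Nx : ℝ) - γ * k) / NΩ := by
      gcongr
    set bd := ((R.bdry S (F i) (θ + θ')).ncard : ℝ) with hbdd
    have hcast2 : NΩ ≤ (k : ℝ) * β' + bd := by
      rw [hNΩd, hkd, hbdd, hβ'd]
      exact_mod_cast htiles
    have key2 : (γ / β') * (1 - bd / NΩ) ≤ γ * (k : ℝ) / NΩ := by
      rw [div_mul_eq_mul_div, div_le_div_iff₀ hβ'pos hNΩpos]
      have h1 : γ * (1 - bd / NΩ) * NΩ = γ * (NΩ - bd) := by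
        field_simp
      rw [h1]
      have h2 : NΩ - bd ≤ (k : ℝ) * β' := by linarith
      nlinarith [mul_le_mul_of_nonneg_left h2 hγpos.le]
    have : fY i = Real.log (Ny : ℝ) / NΩ := rfl
    rw [this]
    have : fX i = Real.log (Nx : ℝ) / NΩ := rfl
    rw [this]
    calc Real.log (Ny : ℝ) / NΩ ≤ (Real.log (Nx : ℝ) - γ * k) / NΩ := hstep
      _ = Real.log (Nx : ℝ) / NΩ - γ * (k : ℝ) / NΩ := by rw [sub_div]
      _ ≤ Real.log (Nx : ℝ) / NΩ - (γ / β') * (1 - bd / NΩ) := by linarith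
  -- boundedness facts
  have hNx1' : ∀ i, 1 ≤ (restr (F i) X).ncard := by
    intro i
    haveI := (hF.2.1 i).to_subtype
    exact (Set.ncard_pos (Set.toFinite _)).mpr ⟨(F i).restrict y₀, y₀, hYX hy₀, rfl⟩
  have hNy1' : ∀ i, 1 ≤ (restr (F i) Y).ncard := by
    intro i
    haveI := (hF.2.1 i).to_subtype
    exact (Set.ncard_pos (Set.toFinite _)).mpr ⟨(F i).restrict y₀, y₀, hy₀, rfl⟩
  have hNΩpos' : ∀ i, (0 : ℝ) < ((F i).ncard : ℝ) := by
    intro i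
    exact_mod_cast (Set.ncard_pos (hF.2.1 i)).mpr (hF.1 i)
  have hfXbdd : IsBoundedUnder (· ≤ ·) atTop fX := by
    apply isBoundedUnder_of
    refine ⟨Real.log q, fun i => ?_⟩
    haveI := (hF.2.1 i).to_subtype
    have hle : (restr (F i) X).ncard ≤ q ^ (F i).ncard := by
      calc (restr (F i) X).ncard ≤ (Set.univ : Set (↥(F i) → Q)).ncard :=
            Set.ncard_le_ncard (Set.subset_univ _) (Set.toFinite _)
        _ = Nat.card (↥(F i) → Q) := Set.ncard_univ _
        _ = q ^ Nat.card ↥(F i) := Nat.card_fun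
        _ = q ^ (F i).ncard := by rw [Nat.card_coe_set_eq]
    have hlogle : Real.log ((restr (F i) X).ncard : ℝ) ≤ ((F i).ncard : ℝ) * Real.log q := by
      calc Real.log ((restr (F i) X).ncard : ℝ) ≤ Real.log ((q : ℝ) ^ (F i).ncard) := by
            apply Real.log_le_log (by exact_mod_cast hNx1' i)
            exact_mod_cast hle
        _ = ((F i).ncard : ℝ) * Real.log q := Real.log_pow _ _
    show Real.log ((restr (F i) X).ncard : ℝ) / ((F i).ncard : ℝ) ≤ Real.log q
    rw [div_le_iff₀ (hNΩpos' i)]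
    linarith [hlogle]
  have hfYcobdd : IsCoboundedUnder (· ≤ ·) atTop fY := by
    apply Filter.IsBoundedUnder.isCoboundedUnder_le
    apply isBoundedUnder_of
    refine ⟨0, fun i => ?_⟩
    show 0 ≤ Real.log ((restr (F i) Y).ncard : ℝ) / ((F i).ncard : ℝ)
    apply div_nonneg _ (le_of_lt (hNΩpos' i))
    apply Real.log_nonneg
    exact_mod_cast hNy1' i
  -- eventual strict improvement
  have hev : ∀ᶠ i in atTop, fY i ≤ fX i - ε := by
    have htend := hF.2.2 (θ + θ')
    have hhalf := Filter.Tendsto.eventually_lt_const (by norm_num : (0 : ℝ) < 1/2) htend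
    filter_upwards [hhalf] with i hi
    have hp := hptwise i
    have hd : ((R.bdry S (F i) (θ + θ')).ncard : ℝ) / ((F i).ncard : ℝ) < 1/2 := hi
    have hge : (γ / β') * (1 - ((R.bdry S (F i) (θ + θ')).ncard : ℝ) / ((F i).ncard : ℝ)) ≥
        (γ / β') * (1/2) := by
      apply mul_le_mul_of_nonneg_left _ (le_of_lt (div_pos hγpos hβ'pos))
      linarith
    have hε2 : (γ / β') * (1/2) = ε := by
      rw [hεd]; ring
    linarith
  -- conclude via limsup
  have hL : limsup fX atTop < limsup fX atTop + ε/2 := by linarith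
  have hevX := eventually_lt_of_limsup_lt hL hfXbdd
  have hevY : ∀ᶠ i in atTop, fY i ≤ limsup fX atTop - ε/2 := by
    filter_upwards [hev, hevX] with i h1 h2
    linarith
  have hfinal : limsup fY atTop ≤ limsup fX atTop - ε/2 := limsup_le_of_le hfYcobdd hevY
  have hfin2 : limsup fY atTop < limsup fX atTop := by linarith
  exact hfin2

end Final
theorem stmt12 {I : Type*} [Nonempty I] [SemilatticeSup I]
    [Finite Q] (R : CellSpace G M) (S : Set G) (hS : R.IsRightGenSet S)
    (H : Subgroup G) (hH : ∀ m : M, R.coord m ∈ H)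
    (hAm : RightAmenable R) (F : I → Set M) (hF : IsFolnerNet R S F)
    (X : Set (M → Q)) (hX : IsSubshift R H X)
    (κ : ℕ) (hsi : IsStronglyIrr R S H X κ) (hnt : X.Nontrivial)
    (Y : Set (M → Q)) (hYX : Y ⊆ X)
    (θ θ' : ℕ) (T : Set M) (hT : IsTiling R S θ κ θ' T)
    (hprop : ∀ t ∈ T, restr (R.ball S t θ) Y ⊂ restr (R.ball S t θ) X) :
    entropy R S F Y < entropy R S F X := by
  rcases Set.eq_empty_or_nonempty Y with hY | hYne
  · subst hY
    obtain ⟨x₁, hx₁⟩ := hnt.nonempty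
    have hprop' : ∀ t ∈ T, restr (R.ball S t θ) ({x₁} : Set (M → Q)) ⊂
        restr (R.ball S t θ) X := by
      intro t ht
      have hsub : restr (R.ball S t θ) ({x₁} : Set (M → Q)) ⊆ restr (R.ball S t θ) X :=
        Set.image_mono (Set.singleton_subset_iff.mpr hx₁)
      obtain ⟨a, ha, b, hb, hab⟩ := two_patterns R S hS H hH X κ hsi hnt t θ
      refine (Set.ssubset_iff_of_subset hsub).mpr ?_
      by_cases hcase : (R.ball S t θ).restrict a = (R.ball S t θ).restrict x₁
      · refine ⟨(R.ball S t θ).restrict b, ⟨b, hb, rfl⟩, fun hmem => ?_⟩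
        simp only [restr, Set.image_singleton, Set.mem_singleton_iff] at hmem
        exact hab (hcase.trans hmem.symm)
      · refine ⟨(R.ball S t θ).restrict a, ⟨a, ha, rfl⟩, fun hmem => ?_⟩
        simp only [restr, Set.image_singleton, Set.mem_singleton_iff] at hmem
        exact hcase hmem
    have hmain := entropy_lt_of_nonempty R S hS H F hF X κ hsi {x₁}
      (Set.singleton_subset_iff.mpr hx₁) (Set.singleton_nonempty x₁) θ θ' T hT hprop'
    have h1 : entropy R S F (∅ : Set (M → Q)) = 0 := by
      unfold entropy
      have heq : (fun i => Real.log ((restr (F i) (∅ : Set (M → Q))).ncard : ℝ) /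
          ((F i).ncard : ℝ)) = fun _ => (0 : ℝ) := by
        funext i
        simp only [restr, Set.image_empty, Set.ncard_empty, Nat.cast_zero, Real.log_zero,
          zero_div]
      rw [heq, limsup_const]
    have h2 : entropy R S F ({x₁} : Set (M → Q)) = 0 := by
      unfold entropy
      have heq : (fun i => Real.log ((restr (F i) ({x₁} : Set (M → Q))).ncard : ℝ) /
          ((F i).ncard : ℝ)) = fun _ => (0 : ℝ) := by
        funext i
        simp only [restr, Set.image_singleton, Set.ncard_singleton, Nat.cast_one,
          Real.log_one, zero_div]
      rw [heq, limsup_const]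
    rw [h1.trans h2.symm]
    exact hmain
  · exact entropy_lt_of_nonempty R S hS H F hF X κ hsi Y hYX hYne θ θ' T hT hprop

end GoE
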